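/- Lyapunov exponent localization: Let [aᵢ,bᵢ] be a bounded connected component of the nonuniform μ-dichotomy spectrum Σ^{ND}_μ(A) and let W_i = U_{γᵢ} ∩ V_{γᵢ₋₁} for resolvent points γᵢ₋₁ < aᵢ ≤ bᵢ < γᵢ. Then for every (s,v) ∈ W_i with v ≠ 0, the μ-Lyapunov exponents satisfy aᵢ ≤ λ⁻(v) ≤ λ⁺(v) ≤ bᵢ, where λ⁺(v) = limsup_{t→+∞} log‖Φ(t,s)v‖ / log μ(t) and λ⁻(v) = liminf_{t→+∞} log‖Φ(t,s)v‖ / log μ(t). -/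
import Mathlib


open Filter Topology

noncomputable section

/-- Bounded linear operators on ℝⁿ. -/
abbrev Op (n : ℕ) := EuclideanSpace ℝ (Fin n) →L[ℝ] EuclideanSpace ℝ (Fin n)

/-- μ is a growth rate: strictly increasing, positive, μ(0)=1, μ→∞ at +∞, μ→0 at -∞. -/
def GrowthRate (μ : ℝ → ℝ) : Prop :=
  StrictMono μ ∧ (∀ t, 0 < μ t) ∧ μ 0 = 1 ∧
    Tendsto μ atTop atTop ∧ Tendsto μ atBot (nhds 0)

/-- The evolution operator Ψ admits a nonuniform μ-dichotomy with invariant projections P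
and constants K, α, β, θ, ν. -/
def NuDWith {n : ℕ} (μ : ℝ → ℝ) (Ψ : ℝ → ℝ → Op n) (P : ℝ → Op n)
    (K α β θ ν : ℝ) : Prop :=
  (∀ t, P t ∘L P t = P t) ∧
  (∀ t s, P t ∘L Ψ t s = Ψ t s ∘L P s) ∧
  1 ≤ K ∧ α < 0 ∧ 0 < β ∧ 0 ≤ θ ∧ 0 ≤ ν ∧ α + θ < 0 ∧ 0 < β - ν ∧
  (∀ t s, s ≤ t → ‖Ψ t s ∘L P s‖ ≤ K * (μ t / μ s) ^ α * μ s ^ (Real.sign s * θ)) ∧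
  (∀ t s, t ≤ s → ‖Ψ t s ∘L (1 - P s)‖ ≤ K * (μ t / μ s) ^ β * μ s ^ (Real.sign s * ν))

/-- The evolution operator Ψ admits a nonuniform μ-dichotomy. -/
def NuD {n : ℕ} (μ : ℝ → ℝ) (Ψ : ℝ → ℝ → Op n) : Prop :=
  ∃ P K α β θ ν, NuDWith μ Ψ P K α β θ ν

/-- The evolution operator Φ_γ(t,s) = (μ(t)/μ(s))^{-γ} Φ(t,s) of the shifted system. -/
def shiftEvo {n : ℕ} (μ : ℝ → ℝ) (γ : ℝ) (Φ : ℝ → ℝ → Op n) : ℝ → ℝ → Op n :=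
  fun t s => (μ t / μ s) ^ (-γ) • Φ t s

/-- The nonuniform μ-resolvent set. -/
def resolventND {n : ℕ} (μ : ℝ → ℝ) (Φ : ℝ → ℝ → Op n) : Set ℝ :=
  {γ | NuD μ (shiftEvo μ γ Φ)}

/-- The nonuniform μ-dichotomy spectrum. -/
def spectrumND {n : ℕ} (μ : ℝ → ℝ) (Φ : ℝ → ℝ → Op n) : Set ℝ :=
  (resolventND μ Φ)ᶜ

/-- Φ is the evolution operator of x' = A(t)x. -/
def IsEvolutionOp {n : ℕ} (A : ℝ → Op n) (Φ : ℝ → ℝ → Op n) : Prop :=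
  (∀ s, Φ s s = 1) ∧ (∀ t τ s, Φ t τ ∘L Φ τ s = Φ t s) ∧
    (∀ s t, HasDerivAt (fun r => Φ r s) (A t ∘L Φ t s) t)

/-- U_γ = {(s,ξ) : sup_{t ≥ 0} ‖Φ(t,s)ξ‖ μ(t)^{-γ} < ∞}. -/
def Uset {n : ℕ} (μ : ℝ → ℝ) (Φ : ℝ → ℝ → Op n) (γ : ℝ) : Set (ℝ × EuclideanSpace ℝ (Fin n)) :=
  {p | ∃ C, ∀ t, 0 ≤ t → ‖Φ t p.1 p.2‖ * μ t ^ (-γ) ≤ C}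

/-- V_γ = {(s,ξ) : sup_{t ≤ 0} ‖Φ(t,s)ξ‖ μ(t)^{-γ} < ∞}. -/
def Vset {n : ℕ} (μ : ℝ → ℝ) (Φ : ℝ → ℝ → Op n) (γ : ℝ) : Set (ℝ × EuclideanSpace ℝ (Fin n)) :=
  {p | ∃ C, ∀ t, t ≤ 0 → ‖Φ t p.1 p.2‖ * μ t ^ (-γ) ≤ C}

-- scalar helpers
lemma st19_rpow4 (x y : ℝ) (hx : 0 < x) (hy : 0 < y) (p q r u : ℝ) :
    (y / x) ^ p * x ^ q * ((x / y) ^ r * x ^ u) = y ^ (p - r) * x ^ (q - p + r + u) := by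
  simp only [Real.rpow_def_of_pos hx, Real.rpow_def_of_pos hy,
    Real.rpow_def_of_pos (div_pos hy hx), Real.rpow_def_of_pos (div_pos hx hy),
    Real.log_div hy.ne' hx.ne', Real.log_div hx.ne' hy.ne', ← Real.exp_add]
  congr 1; ring

lemma st19_rpow3 (x y : ℝ) (hx : 0 < x) (hy : 0 < y) (p q : ℝ) :
    (x / y) ^ p * ((x / y) ^ q) * x ^ (-(p + q)) = y ^ (-(p + q)) := by
  simp only [Real.rpow_def_of_pos hx, Real.rpow_def_of_pos hy,
    Real.rpow_def_of_pos (div_pos hx hy), Real.log_div hx.ne' hy.ne', ← Real.exp_add]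
  congr 1; ring

lemma st19_rpow_bracket (x y : ℝ) (hx : 0 < x) (hy : 0 < y) (b c nu : ℝ) :
    y ^ (-(b + c)) * x ^ (c + b - nu) * ((y / x) ^ b * x ^ nu * (x / y) ^ (-c)) = 1 := by
  simp only [Real.rpow_def_of_pos hx, Real.rpow_def_of_pos hy,
    Real.rpow_def_of_pos (div_pos hy hx), Real.rpow_def_of_pos (div_pos hx hy),
    Real.log_div hy.ne' hx.ne', Real.log_div hx.ne' hy.ne', ← Real.exp_add]
  rw [← Real.exp_zero]; congr 1; ring

section evo
variable {n : ℕ} {A : ℝ → Op n} {Φ : ℝ → ℝ → Op n} {μ : ℝ → ℝ}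

lemma st19_evo_inv (hΦ : IsEvolutionOp A Φ) (t s : ℝ) (w : EuclideanSpace ℝ (Fin n)) :
    Φ s t (Φ t s w) = w := by
  have h : (Φ s t ∘L Φ t s) w = (1 : Op n) w := by rw [hΦ.2.1 s t s, hΦ.1 s]
  simpa using h

lemma st19_shift_apply (c t s : ℝ) (w : EuclideanSpace ℝ (Fin n)) :
    shiftEvo μ c Φ t s w = (μ t / μ s) ^ (-c) • Φ t s w := rfl

lemma st19_shift_norm (hgr : GrowthRate μ) (c t s : ℝ) (w : EuclideanSpace ℝ (Fin n)) :
    ‖shiftEvo μ c Φ t s w‖ = (μ t / μ s) ^ (-c) * ‖Φ t s w‖ := by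
  rw [st19_shift_apply, norm_smul, Real.norm_eq_abs,
    abs_of_pos (Real.rpow_pos_of_pos (div_pos (hgr.2.1 t) (hgr.2.1 s)) _)]

lemma st19_shift_inv (hΦ : IsEvolutionOp A Φ) (hgr : GrowthRate μ) (c t s : ℝ)
    (w : EuclideanSpace ℝ (Fin n)) :
    shiftEvo μ c Φ s t (shiftEvo μ c Φ t s w) = w := by
  have hx := hgr.2.1 t; have hy := hgr.2.1 s
  rw [st19_shift_apply, st19_shift_apply, map_smul, smul_smul, st19_evo_inv hΦ,
    ← Real.mul_rpow (div_pos hy hx).le (div_pos hx hy).le,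
    div_mul_div_comm, mul_comm (μ s), div_self (by positivity), Real.one_rpow, one_smul]

lemma st19_commute {P : ℝ → Op n} {K α β θ ν c : ℝ}
    (hd : NuDWith μ (shiftEvo μ c Φ) P K α β θ ν) (t s : ℝ) (w : EuclideanSpace ℝ (Fin n)) :
    P t (shiftEvo μ c Φ t s w) = shiftEvo μ c Φ t s (P s w) := by
  have h := DFunLike.congr_fun (hd.2.1 t s) w
  simpa using h

lemma st19_id1 (hΦ : IsEvolutionOp A Φ) (hgr : GrowthRate μ) {P : ℝ → Op n} {K α β θ ν c : ℝ}
    (hd : NuDWith μ (shiftEvo μ c Φ) P K α β θ ν) (t s : ℝ) (v : EuclideanSpace ℝ (Fin n)) :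
    (shiftEvo μ c Φ s t ∘L (1 - P t)) (shiftEvo μ c Φ t s v) = v - P s v := by
  have h1 : ((1 : Op n) - P t) (shiftEvo μ c Φ t s v) = shiftEvo μ c Φ t s (v - P s v) := by
    simp only [ContinuousLinearMap.sub_apply, ContinuousLinearMap.one_apply, map_sub]
    rw [st19_commute hd]
  rw [ContinuousLinearMap.comp_apply, h1, st19_shift_inv hΦ hgr]

lemma st19_id2 (hΦ : IsEvolutionOp A Φ) (hgr : GrowthRate μ) {P : ℝ → Op n} {K α β θ ν c : ℝ}
    (hd : NuDWith μ (shiftEvo μ c Φ) P K α β θ ν) (t s : ℝ) (v : EuclideanSpace ℝ (Fin n)) :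
    (shiftEvo μ c Φ s t ∘L P t) (shiftEvo μ c Φ t s v) = P s v := by
  rw [ContinuousLinearMap.comp_apply, st19_commute hd, st19_shift_inv hΦ hgr]

end evo

section key
variable {n : ℕ} {A : ℝ → Op n} {Φ : ℝ → ℝ → Op n} {μ : ℝ → ℝ}

lemma st19_keyUp (hΦ : IsEvolutionOp A Φ) (hgr : GrowthRate μ)
    (s : ℝ) (v : EuclideanSpace ℝ (Fin n)) {P : ℝ → Op n} {K α β θ ν c δ C : ℝ}
    (hd : NuDWith μ (shiftEvo μ c Φ) P K α β θ ν)
    (hδ : δ < c + (β - ν))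
    (hC : ∀ t, max s 0 ≤ t → ‖Φ t s v‖ * μ t ^ (-δ) ≤ C) :
    ∃ C', ∀ t, max s 0 ≤ t → ‖Φ t s v‖ * μ t ^ (-(c + α)) ≤ C' := by
  have hd' := hd
  obtain ⟨-, -, hK, hα, hβ, hθ, hν, hαθ, hβν, hstab, hunst⟩ := hd'
  have μpos := hgr.2.1
  have hy := μpos s
  have hNle : ∀ t, max s 0 ≤ t → ‖Φ t s v‖ ≤ C * μ t ^ δ := by
    intro t ht
    have hx := μpos t
    have h2 := mul_le_mul_of_nonneg_right (hC t ht) (Real.rpow_pos_of_pos hx δ).le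
    rwa [mul_assoc, ← Real.rpow_add hx, neg_add_cancel, Real.rpow_zero, mul_one] at h2
  have hw : v - P s v = 0 := by
    have hbound : ∀ t, max s 0 + 1 ≤ t →
        ‖v - P s v‖ ≤ K * C * μ s ^ (β - -c) * μ t ^ (ν - β + -c + δ) := by
      intro t ht
      have hms : (0:ℝ) ≤ max s 0 := le_max_right s 0
      have hts : s ≤ t := le_trans (le_max_left s 0) (by linarith)
      have ht0 : (0:ℝ) < t := by linarith
      have hx := μpos t
      have hB := hunst s t hts
      rw [Real.sign_of_pos ht0, one_mul] at hB
      have hid := st19_id1 hΦ hgr hd t s v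
      have h1 : ‖v - P s v‖ ≤ K * (μ s / μ t) ^ β * μ t ^ ν * ‖shiftEvo μ c Φ t s v‖ := by
        rw [← hid]
        exact (ContinuousLinearMap.le_opNorm _ _).trans
          (mul_le_mul_of_nonneg_right hB (norm_nonneg _))
      rw [st19_shift_norm hgr] at h1
      have h3 := hNle t (by linarith)
      have hout : (0:ℝ) ≤ K * (μ s / μ t) ^ β * μ t ^ ν := by
        have hK0 : (0:ℝ) < K := lt_of_lt_of_le one_pos hK
        positivity
      calc ‖v - P s v‖
          ≤ K * (μ s / μ t) ^ β * μ t ^ ν * ((μ t / μ s) ^ (-c) * ‖Φ t s v‖) := h1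
        _ ≤ K * (μ s / μ t) ^ β * μ t ^ ν * ((μ t / μ s) ^ (-c) * (C * μ t ^ δ)) := by
            exact mul_le_mul_of_nonneg_left
              (mul_le_mul_of_nonneg_left h3 (Real.rpow_pos_of_pos (div_pos hx hy) _).le) hout
        _ = K * C * ((μ s / μ t) ^ β * μ t ^ ν * ((μ t / μ s) ^ (-c) * μ t ^ δ)) := by ring
        _ = K * C * (μ s ^ (β - -c) * μ t ^ (ν - β + -c + δ)) := by
            rw [st19_rpow4 (μ t) (μ s) hx hy β ν (-c) δ]
        _ = K * C * μ s ^ (β - -c) * μ t ^ (ν - β + -c + δ) := by ring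
    have htend : Tendsto (fun t => K * C * μ s ^ (β - -c) * μ t ^ (ν - β + -c + δ))
        atTop (nhds 0) := by
      have h0 : Tendsto (fun x : ℝ => x ^ (ν - β + -c + δ)) atTop (nhds 0) := by
        have := tendsto_rpow_neg_atTop (y := -(ν - β + -c + δ)) (by linarith)
        simpa using this
      have := (h0.comp hgr.2.2.2.1).const_mul (K * C * μ s ^ (β - -c))
      simpa [Function.comp, mul_assoc] using this
    have h0 : ‖v - P s v‖ ≤ 0 :=
      ge_of_tendsto htend (eventually_atTop.2 ⟨max s 0 + 1, hbound⟩)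
    exact norm_le_zero_iff.mp h0
  have hPv : P s v = v := (sub_eq_zero.mp hw).symm
  refine ⟨K * ‖v‖ * μ s ^ (Real.sign s * θ) * μ s ^ (-(c + α)), fun t ht => ?_⟩
  have hts : s ≤ t := le_trans (le_max_left s 0) ht
  have hx := μpos t
  have hB := hstab t s hts
  have hΨ : ‖shiftEvo μ c Φ t s v‖ ≤ K * (μ t / μ s) ^ α * μ s ^ (Real.sign s * θ) * ‖v‖ := by
    have hh : shiftEvo μ c Φ t s v = (shiftEvo μ c Φ t s ∘L P s) v := by
      rw [ContinuousLinearMap.comp_apply, hPv]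
    rw [hh]
    exact (ContinuousLinearMap.le_opNorm _ _).trans
      (mul_le_mul_of_nonneg_right hB (norm_nonneg _))
  have hΦeq : ‖Φ t s v‖ = (μ t / μ s) ^ (c:ℝ) * ‖shiftEvo μ c Φ t s v‖ := by
    rw [st19_shift_norm hgr, ← mul_assoc, ← Real.rpow_add (div_pos hx hy),
      add_neg_cancel, Real.rpow_zero, one_mul]
  calc ‖Φ t s v‖ * μ t ^ (-(c + α))
      = (μ t / μ s) ^ (c:ℝ) * ‖shiftEvo μ c Φ t s v‖ * μ t ^ (-(c + α)) := by rw [hΦeq]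
    _ ≤ (μ t / μ s) ^ (c:ℝ) * (K * (μ t / μ s) ^ α * μ s ^ (Real.sign s * θ) * ‖v‖)
          * μ t ^ (-(c + α)) := by
        exact mul_le_mul_of_nonneg_right
          (mul_le_mul_of_nonneg_left hΨ (Real.rpow_pos_of_pos (div_pos hx hy) _).le)
          (Real.rpow_pos_of_pos hx _).le
    _ = K * ‖v‖ * μ s ^ (Real.sign s * θ)
          * ((μ t / μ s) ^ (c:ℝ) * (μ t / μ s) ^ α * μ t ^ (-(c + α))) := by ring
    _ = K * ‖v‖ * μ s ^ (Real.sign s * θ) * μ s ^ (-(c + α)) := by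
        rw [st19_rpow3 (μ t) (μ s) hx hy c α]

end key

section key2
variable {n : ℕ} {A : ℝ → Op n} {Φ : ℝ → ℝ → Op n} {μ : ℝ → ℝ}

lemma st19_keyDown (hΦ : IsEvolutionOp A Φ) (hgr : GrowthRate μ)
    (s : ℝ) (v : EuclideanSpace ℝ (Fin n)) {P : ℝ → Op n} {K α β θ ν c δ C : ℝ}
    (hd : NuDWith μ (shiftEvo μ c Φ) P K α β θ ν)
    (hδ : c + α + θ < δ)
    (hC : ∀ t, t ≤ min s 0 → ‖Φ t s v‖ * μ t ^ (-δ) ≤ C) :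
    (∃ C', ∀ t, t ≤ min s 0 → ‖Φ t s v‖ * μ t ^ (-(c + β)) ≤ C') ∧
    (v ≠ 0 → ∃ c₀, 0 < c₀ ∧ ∀ t, max s 0 + 1 ≤ t →
      c₀ * μ t ^ (c + β - ν) ≤ ‖Φ t s v‖) := by
  have hd' := hd
  obtain ⟨-, -, hK, hα, hβ, hθ, hν, hαθ, hβν, hstab, hunst⟩ := hd'
  have hK0 : (0:ℝ) < K := lt_of_lt_of_le one_pos hK
  have μpos := hgr.2.1
  have hy := μpos s
  have hNle : ∀ t, t ≤ min s 0 → ‖Φ t s v‖ ≤ C * μ t ^ δ := by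
    intro t ht
    have hx := μpos t
    have h2 := mul_le_mul_of_nonneg_right (hC t ht) (Real.rpow_pos_of_pos hx δ).le
    rwa [mul_assoc, ← Real.rpow_add hx, neg_add_cancel, Real.rpow_zero, mul_one] at h2
  -- Step a : P s v = 0
  have hP0 : P s v = 0 := by
    have hbound : ∀ t, t ≤ min s 0 - 1 →
        ‖P s v‖ ≤ K * C * μ s ^ (α - -c) * μ t ^ (-θ - α + -c + δ) := by
      intro t ht
      have hm0 : min s 0 ≤ 0 := min_le_right s 0
      have hts : t ≤ s := le_trans (by linarith) (min_le_left s 0)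
      have ht0 : t < 0 := by linarith
      have hx := μpos t
      have hB := hstab s t hts
      rw [Real.sign_of_neg ht0, neg_one_mul] at hB
      have hid := st19_id2 hΦ hgr hd t s v
      have h1 : ‖P s v‖ ≤ K * (μ s / μ t) ^ α * μ t ^ (-θ) * ‖shiftEvo μ c Φ t s v‖ := by
        rw [← hid]
        exact (ContinuousLinearMap.le_opNorm _ _).trans
          (mul_le_mul_of_nonneg_right hB (norm_nonneg _))
      rw [st19_shift_norm hgr] at h1
      have h3 := hNle t (by linarith)
      have hout : (0:ℝ) ≤ K * (μ s / μ t) ^ α * μ t ^ (-θ) := by positivity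
      calc ‖P s v‖
          ≤ K * (μ s / μ t) ^ α * μ t ^ (-θ) * ((μ t / μ s) ^ (-c) * ‖Φ t s v‖) := h1
        _ ≤ K * (μ s / μ t) ^ α * μ t ^ (-θ) * ((μ t / μ s) ^ (-c) * (C * μ t ^ δ)) := by
            exact mul_le_mul_of_nonneg_left
              (mul_le_mul_of_nonneg_left h3 (Real.rpow_pos_of_pos (div_pos hx hy) _).le) hout
        _ = K * C * ((μ s / μ t) ^ α * μ t ^ (-θ) * ((μ t / μ s) ^ (-c) * μ t ^ δ)) := by ring
        _ = K * C * (μ s ^ (α - -c) * μ t ^ (-θ - α + -c + δ)) := by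
            rw [st19_rpow4 (μ t) (μ s) hx hy α (-θ) (-c) δ]
        _ = K * C * μ s ^ (α - -c) * μ t ^ (-θ - α + -c + δ) := by ring
    have hE : (0:ℝ) < -θ - α + -c + δ := by linarith
    have htend : Tendsto (fun t => K * C * μ s ^ (α - -c) * μ t ^ (-θ - α + -c + δ))
        atBot (nhds 0) := by
      have hca : ContinuousAt (fun x : ℝ => x ^ (-θ - α + -c + δ)) 0 :=
        Real.continuousAt_rpow_const 0 _ (Or.inr hE.le)
      have h0 : Tendsto (fun t => μ t ^ (-θ - α + -c + δ)) atBot (nhds 0) := by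
        have := hca.tendsto.comp hgr.2.2.2.2
        rwa [Real.zero_rpow hE.ne'] at this
      have := h0.const_mul (K * C * μ s ^ (α - -c))
      simpa [mul_assoc] using this
    have h0 : ‖P s v‖ ≤ 0 :=
      ge_of_tendsto htend (eventually_atBot.2 ⟨min s 0 - 1, hbound⟩)
    exact norm_le_zero_iff.mp h0
  constructor
  · -- backward bound at exponent c + β
    refine ⟨K * ‖v‖ * μ s ^ (Real.sign s * ν) * μ s ^ (-(c + β)), fun t ht => ?_⟩
    have hts : t ≤ s := le_trans ht (min_le_left s 0)
    have hx := μpos t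
    have hB := hunst t s hts
    have hΨ : ‖shiftEvo μ c Φ t s v‖ ≤ K * (μ t / μ s) ^ β * μ s ^ (Real.sign s * ν) * ‖v‖ := by
      have hh : shiftEvo μ c Φ t s v = (shiftEvo μ c Φ t s ∘L (1 - P s)) v := by
        simp [ContinuousLinearMap.comp_apply, ContinuousLinearMap.sub_apply,
          ContinuousLinearMap.one_apply, hP0, sub_zero]
      rw [hh]
      exact (ContinuousLinearMap.le_opNorm _ _).trans
        (mul_le_mul_of_nonneg_right hB (norm_nonneg _))
    have hΦeq : ‖Φ t s v‖ = (μ t / μ s) ^ (c:ℝ) * ‖shiftEvo μ c Φ t s v‖ := by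
      rw [st19_shift_norm hgr, ← mul_assoc, ← Real.rpow_add (div_pos hx hy),
        add_neg_cancel, Real.rpow_zero, one_mul]
    calc ‖Φ t s v‖ * μ t ^ (-(c + β))
        = (μ t / μ s) ^ (c:ℝ) * ‖shiftEvo μ c Φ t s v‖ * μ t ^ (-(c + β)) := by rw [hΦeq]
      _ ≤ (μ t / μ s) ^ (c:ℝ) * (K * (μ t / μ s) ^ β * μ s ^ (Real.sign s * ν) * ‖v‖)
            * μ t ^ (-(c + β)) := by
          exact mul_le_mul_of_nonneg_right
            (mul_le_mul_of_nonneg_left hΨ (Real.rpow_pos_of_pos (div_pos hx hy) _).le)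
            (Real.rpow_pos_of_pos hx _).le
      _ = K * ‖v‖ * μ s ^ (Real.sign s * ν)
            * ((μ t / μ s) ^ (c:ℝ) * (μ t / μ s) ^ β * μ t ^ (-(c + β))) := by ring
      _ = K * ‖v‖ * μ s ^ (Real.sign s * ν) * μ s ^ (-(c + β)) := by
          rw [st19_rpow3 (μ t) (μ s) hx hy c β]
  · -- forward lower bound
    intro hv
    refine ⟨‖v‖ * μ s ^ (-(β + c)) / K,
      div_pos (mul_pos (norm_pos_iff.mpr hv) (Real.rpow_pos_of_pos hy _)) hK0,
      fun t ht => ?_⟩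
    have hms : (0:ℝ) ≤ max s 0 := le_max_right s 0
    have hts : s ≤ t := le_trans (le_max_left s 0) (by linarith)
    have ht0 : (0:ℝ) < t := by linarith
    have hx := μpos t
    have hB := hunst s t hts
    rw [Real.sign_of_pos ht0, one_mul] at hB
    have hid : (shiftEvo μ c Φ s t ∘L (1 - P t)) (shiftEvo μ c Φ t s v) = v := by
      rw [st19_id1 hΦ hgr hd t s v, hP0, sub_zero]
    have h1 := (ContinuousLinearMap.le_opNorm (shiftEvo μ c Φ s t ∘L (1 - P t))
      (shiftEvo μ c Φ t s v)).trans (mul_le_mul_of_nonneg_right hB (norm_nonneg _))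
    rw [hid, st19_shift_norm hgr] at h1
    set M := K * (μ s / μ t) ^ β * μ t ^ ν * (μ t / μ s) ^ (-c) with hMdef
    have hM : 0 < M := by rw [hMdef]; positivity
    have h1' : ‖v‖ ≤ ‖Φ t s v‖ * M := by
      calc ‖v‖ ≤ K * (μ s / μ t) ^ β * μ t ^ ν * ((μ t / μ s) ^ (-c) * ‖Φ t s v‖) := h1
        _ = ‖Φ t s v‖ * M := by rw [hMdef]; ring
    have hid2 : ‖v‖ * μ s ^ (-(β + c)) / K * μ t ^ (c + β - ν) * M = ‖v‖ := by
      calc ‖v‖ * μ s ^ (-(β + c)) / K * μ t ^ (c + β - ν) * M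
          = ‖v‖ * (μ s ^ (-(β + c)) * μ t ^ (c + β - ν)
              * ((μ s / μ t) ^ β * μ t ^ ν * (μ t / μ s) ^ (-c))) * (K / K) := by
            rw [hMdef]; ring
        _ = ‖v‖ := by
            rw [st19_rpow_bracket (μ t) (μ s) hx hy β c ν, div_self hK0.ne', mul_one, mul_one]
    have h5 : ‖v‖ * μ s ^ (-(β + c)) / K * μ t ^ (c + β - ν) * M ≤ ‖Φ t s v‖ * M := by
      rw [hid2]; exact h1'
    exact le_of_mul_le_mul_right h5 hM

end key2

section boot
variable {n : ℕ} {A : ℝ → Op n} {Φ : ℝ → ℝ → Op n} {μ : ℝ → ℝ}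

lemma st19_Qmono (hgr : GrowthRate μ) (s : ℝ) (v : EuclideanSpace ℝ (Fin n))
    {δ δ' C : ℝ} (h : δ ≤ δ')
    (hC : ∀ t, max s 0 ≤ t → ‖Φ t s v‖ * μ t ^ (-δ) ≤ C) :
    ∀ t, max s 0 ≤ t → ‖Φ t s v‖ * μ t ^ (-δ') ≤ C := by
  intro t ht
  have h0t : (0:ℝ) ≤ t := le_trans (le_max_right s 0) ht
  have h1 : (1:ℝ) ≤ μ t := by
    have h2 := hgr.1.monotone h0t; rwa [hgr.2.2.1] at h2
  refine le_trans ?_ (hC t ht)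
  exact mul_le_mul_of_nonneg_left
    (Real.rpow_le_rpow_of_exponent_le h1 (neg_le_neg h)) (norm_nonneg _)

lemma st19_Rmono (hgr : GrowthRate μ) (s : ℝ) (v : EuclideanSpace ℝ (Fin n))
    {δ δ' C : ℝ} (h : δ' ≤ δ)
    (hC : ∀ t, t ≤ min s 0 → ‖Φ t s v‖ * μ t ^ (-δ) ≤ C) :
    ∀ t, t ≤ min s 0 → ‖Φ t s v‖ * μ t ^ (-δ') ≤ C := by
  intro t ht
  have h0t : t ≤ 0 := le_trans ht (min_le_right s 0)
  have h1 : μ t ≤ 1 := by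
    have h2 := hgr.1.monotone h0t; rwa [hgr.2.2.1] at h2
  refine le_trans ?_ (hC t ht)
  exact mul_le_mul_of_nonneg_left
    (Real.rpow_le_rpow_of_exponent_ge (hgr.2.1 t) h1 (neg_le_neg h)) (norm_nonneg _)

lemma st19_bootUp (hΦ : IsEvolutionOp A Φ) (hgr : GrowthRate μ)
    (s : ℝ) (v : EuclideanSpace ℝ (Fin n)) {b γ'' : ℝ}
    (hres2 : ∀ γ ∈ Set.Ioc b γ'', NuD μ (shiftEvo μ γ Φ))
    (hQ : ∃ C, ∀ t, max s 0 ≤ t → ‖Φ t s v‖ * μ t ^ (-γ'') ≤ C)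
    (x : ℝ) (hx1 : b < x) (hx2 : x ≤ γ'') :
    ∃ C, ∀ t, max s 0 ≤ t → ‖Φ t s v‖ * μ t ^ (-x) ≤ C := by
  set E := {δ : ℝ | x ≤ δ ∧ δ ≤ γ'' ∧ ∃ C, ∀ t, max s 0 ≤ t → ‖Φ t s v‖ * μ t ^ (-δ) ≤ C}
    with hE
  have hne : γ'' ∈ E := ⟨hx2, le_refl _, hQ⟩
  have hbdd : BddBelow E := ⟨x, fun δ hδ => hδ.1⟩
  set c := sInf E with hc
  have hxc : x ≤ c := le_csInf ⟨γ'', hne⟩ fun δ hδ => hδ.1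
  have hcγ : c ≤ γ'' := csInf_le hbdd hne
  obtain ⟨P, K, α, β, θ, ν, hd⟩ := hres2 c ⟨lt_of_lt_of_le hx1 hxc, hcγ⟩
  have hα : α < 0 := hd.2.2.2.1
  have hβν : 0 < β - ν := hd.2.2.2.2.2.2.2.2.1
  obtain ⟨δ, hδE, hδlt⟩ : ∃ δ ∈ E, δ < c + (β - ν) :=
    (csInf_lt_iff hbdd ⟨γ'', hne⟩).mp (by linarith)
  obtain ⟨C1, hC1⟩ := hδE.2.2
  obtain ⟨C2, hC2⟩ := st19_keyUp hΦ hgr s v hd hδlt hC1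
  have hcx : c ≤ x := by
    by_contra hcon
    push_neg at hcon
    have hlt : max (c + α) x < c := max_lt (by linarith) hcon
    have hδ'E : max (c + α) x ∈ E :=
      ⟨le_max_right _ _, by linarith, ⟨C2, st19_Qmono hgr s v (le_max_left _ _) hC2⟩⟩
    have := csInf_le hbdd hδ'E
    linarith
  exact ⟨C2, st19_Qmono hgr s v (by linarith : c + α ≤ x) hC2⟩

lemma st19_bootDown (hΦ : IsEvolutionOp A Φ) (hgr : GrowthRate μ)
    (s : ℝ) (v : EuclideanSpace ℝ (Fin n)) (hv : v ≠ 0) {a γ' : ℝ}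
    (hres1 : ∀ γ ∈ Set.Ico γ' a, NuD μ (shiftEvo μ γ Φ))
    (hR : ∃ C, ∀ t, t ≤ min s 0 → ‖Φ t s v‖ * μ t ^ (-γ') ≤ C)
    (x : ℝ) (hx1 : γ' ≤ x) (hx2 : x < a) :
    ∃ c₀ p, 0 < c₀ ∧ x ≤ p ∧ ∀ t, max s 0 + 1 ≤ t → c₀ * μ t ^ p ≤ ‖Φ t s v‖ := by
  set E := {δ : ℝ | γ' ≤ δ ∧ δ ≤ x ∧ ∃ C, ∀ t, t ≤ min s 0 → ‖Φ t s v‖ * μ t ^ (-δ) ≤ C}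
    with hE
  have hne : γ' ∈ E := ⟨le_refl _, hx1, hR⟩
  have hbdd : BddAbove E := ⟨x, fun δ hδ => hδ.2.1⟩
  set c := sSup E with hc
  have hγc : γ' ≤ c := le_csSup hbdd hne
  have hcx : c ≤ x := csSup_le ⟨γ', hne⟩ fun δ hδ => hδ.2.1
  obtain ⟨P, K, α, β, θ, ν, hd⟩ := hres1 c ⟨hγc, lt_of_le_of_lt hcx hx2⟩
  have hβ : 0 < β := hd.2.2.2.2.1
  have hβν : 0 < β - ν := hd.2.2.2.2.2.2.2.2.1
  have hαθ : α + θ < 0 := hd.2.2.2.2.2.2.2.1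
  obtain ⟨δ, hδE, hδgt⟩ : ∃ δ ∈ E, c + α + θ < δ :=
    exists_lt_of_lt_csSup ⟨γ', hne⟩ (by linarith)
  obtain ⟨C1, hC1⟩ := hδE.2.2
  have hkd := st19_keyDown hΦ hgr s v hd hδgt hC1
  have hxc : x ≤ c := by
    by_contra hcon
    push_neg at hcon
    have hgt : c < min (c + β) x := lt_min (by linarith) hcon
    obtain ⟨C2, hC2⟩ := hkd.1
    have hδ'E : min (c + β) x ∈ E :=
      ⟨by linarith, min_le_right _ _, ⟨C2, st19_Rmono hgr s v (min_le_left _ _) hC2⟩⟩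
    have := le_csSup hbdd hδ'E
    linarith
  obtain ⟨c₀, hc₀, hlow⟩ := hkd.2 hv
  exact ⟨c₀, c + β - ν, hc₀, by linarith, hlow⟩

end boot

section anal
variable {n : ℕ} {A : ℝ → Op n} {Φ : ℝ → ℝ → Op n} {μ : ℝ → ℝ}

lemma st19_Npos (hΦ : IsEvolutionOp A Φ) (s : ℝ) (v : EuclideanSpace ℝ (Fin n))
    (hv : v ≠ 0) (t : ℝ) : 0 < ‖Φ t s v‖ := by
  rw [norm_pos_iff]
  intro h0
  apply hv
  have h := st19_evo_inv hΦ t s v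
  rw [h0, map_zero] at h
  exact h.symm

lemma st19_tend (hgr : GrowthRate μ) (x d : ℝ) :
    Tendsto (fun t => x + d / Real.log (μ t)) atTop (nhds x) := by
  have hlog : Tendsto (fun t => Real.log (μ t)) atTop atTop :=
    Real.tendsto_log_atTop.comp hgr.2.2.2.1
  have h0 : Tendsto (fun t => d / Real.log (μ t)) atTop (nhds 0) :=
    tendsto_const_nhds.div_atTop hlog
  simpa using tendsto_const_nhds.add h0

lemma st19_ev_upper (hΦ : IsEvolutionOp A Φ) (hgr : GrowthRate μ)
    (s : ℝ) (v : EuclideanSpace ℝ (Fin n)) (hv : v ≠ 0) {x C : ℝ}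
    (hC : ∀ t, max s 0 ≤ t → ‖Φ t s v‖ * μ t ^ (-x) ≤ C) :
    ∀ᶠ t in atTop, Real.log ‖Φ t s v‖ / Real.log (μ t)
      ≤ x + Real.log (max C 1) / Real.log (μ t) := by
  rw [eventually_atTop]
  refine ⟨max (max s 0) 1, fun t ht => ?_⟩
  have ht1 : max s 0 ≤ t := le_trans (le_max_left _ _) ht
  have ht0 : (0:ℝ) < t := lt_of_lt_of_le one_pos (le_trans (le_max_right _ _) ht)
  have hμ1 : 1 < μ t := by have h := hgr.1 ht0; rwa [hgr.2.2.1] at h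
  have hL : 0 < Real.log (μ t) := Real.log_pos hμ1
  have hC₁ : (0:ℝ) < max C 1 := lt_of_lt_of_le one_pos (le_max_right _ _)
  have hN := st19_Npos hΦ s v hv t
  have hxt := hgr.2.1 t
  have hNle : ‖Φ t s v‖ ≤ max C 1 * μ t ^ x := by
    have h2 := mul_le_mul_of_nonneg_right ((hC t ht1).trans (le_max_left C 1))
      (Real.rpow_pos_of_pos hxt x).le
    rwa [mul_assoc, ← Real.rpow_add hxt, neg_add_cancel, Real.rpow_zero, mul_one] at h2
  have hlog : Real.log ‖Φ t s v‖ ≤ Real.log (max C 1) + x * Real.log (μ t) := by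
    have h3 := Real.log_le_log hN hNle
    rwa [Real.log_mul hC₁.ne' (Real.rpow_pos_of_pos hxt x).ne', Real.log_rpow hxt] at h3
  rw [div_le_iff₀ hL]
  calc Real.log ‖Φ t s v‖ ≤ Real.log (max C 1) + x * Real.log (μ t) := hlog
    _ = (x + Real.log (max C 1) / Real.log (μ t)) * Real.log (μ t) := by
        field_simp
        ring

lemma st19_ev_lower (hgr : GrowthRate μ)
    (s : ℝ) (v : EuclideanSpace ℝ (Fin n)) {x c₀ p : ℝ} (hc₀ : 0 < c₀) (hxp : x ≤ p)
    (hlow : ∀ t, max s 0 + 1 ≤ t → c₀ * μ t ^ p ≤ ‖Φ t s v‖) :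
    ∀ᶠ t in atTop, x + Real.log c₀ / Real.log (μ t)
      ≤ Real.log ‖Φ t s v‖ / Real.log (μ t) := by
  rw [eventually_atTop]
  refine ⟨max (max s 0 + 1) 1, fun t ht => ?_⟩
  have ht1 : max s 0 + 1 ≤ t := le_trans (le_max_left _ _) ht
  have ht0 : (0:ℝ) < t := lt_of_lt_of_le one_pos (le_trans (le_max_right _ _) ht)
  have hμ1 : 1 < μ t := by have h := hgr.1 ht0; rwa [hgr.2.2.1] at h
  have hL : 0 < Real.log (μ t) := Real.log_pos hμ1
  have hxt := hgr.2.1 t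
  have hlog : Real.log c₀ + p * Real.log (μ t) ≤ Real.log ‖Φ t s v‖ := by
    have h3 := Real.log_le_log (by positivity) (hlow t ht1)
    rwa [Real.log_mul hc₀.ne' (Real.rpow_pos_of_pos hxt p).ne', Real.log_rpow hxt] at h3
  rw [le_div_iff₀ hL]
  calc (x + Real.log c₀ / Real.log (μ t)) * Real.log (μ t)
      = Real.log c₀ + x * Real.log (μ t) := by field_simp; ring
    _ ≤ Real.log c₀ + p * Real.log (μ t) := by nlinarith [hL]
    _ ≤ _ := hlog

end anal

/-- if [a,b] is a bounded connected component of the spectrum,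
γ' < a and b < γ'' are resolvent points (with (γ',a) and (b,γ'') in the resolvent set),
and (s,v) ∈ W = U_{γ''} ∩ V_{γ'} with v ≠ 0, then the μ-Lyapunov exponents satisfy
a ≤ λ⁻(v) ≤ λ⁺(v) ≤ b. -/
theorem stmt19 (n : ℕ) (A : ℝ → Op n) (hA : Continuous A)
    (Φ : ℝ → ℝ → Op n) (hΦ : IsEvolutionOp A Φ)
    (μ : ℝ → ℝ) (hgr : GrowthRate μ) (hdiff : Differentiable ℝ μ)
    (a b γ' γ'' : ℝ) (h1 : γ' < a) (h2 : a ≤ b) (h3 : b < γ'')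
    (hspec : Set.Icc a b ⊆ spectrumND μ Φ)
    (hres1 : Set.Ico γ' a ⊆ resolventND μ Φ)
    (hres2 : Set.Ioc b γ'' ⊆ resolventND μ Φ) :
    ∀ s v, (s, v) ∈ Uset μ Φ γ'' → (s, v) ∈ Vset μ Φ γ' → v ≠ 0 →
      a ≤ Filter.liminf (fun t => Real.log ‖Φ t s v‖ / Real.log (μ t)) atTop ∧
      Filter.liminf (fun t => Real.log ‖Φ t s v‖ / Real.log (μ t)) atTop ≤
        Filter.limsup (fun t => Real.log ‖Φ t s v‖ / Real.log (μ t)) atTop ∧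
      Filter.limsup (fun t => Real.log ‖Φ t s v‖ / Real.log (μ t)) atTop ≤ b := by
  intro s v hU hV hv
  set f : ℝ → ℝ := fun t => Real.log ‖Φ t s v‖ / Real.log (μ t) with hf
  obtain ⟨CU, hCU⟩ := hU
  obtain ⟨CV, hCV⟩ := hV
  have hQ : ∃ C, ∀ t, max s 0 ≤ t → ‖Φ t s v‖ * μ t ^ (-γ'') ≤ C :=
    ⟨CU, fun t ht => hCU t (le_trans (le_max_right s 0) ht)⟩
  have hR : ∃ C, ∀ t, t ≤ min s 0 → ‖Φ t s v‖ * μ t ^ (-γ') ≤ C :=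
    ⟨CV, fun t ht => hCV t (le_trans ht (min_le_right s 0))⟩
  have hres1' : ∀ γ ∈ Set.Ico γ' a, NuD μ (shiftEvo μ γ Φ) := fun γ hγ => hres1 hγ
  have hres2' : ∀ γ ∈ Set.Ioc b γ'', NuD μ (shiftEvo μ γ Φ) := fun γ hγ => hres2 hγ
  -- one fixed lower bound (for boundedness)
  set x₀ : ℝ := (γ' + a) / 2 with hx₀
  obtain ⟨c₀, p₀, hc₀, hxp₀, hlow₀⟩ :=
    st19_bootDown hΦ hgr s v hv hres1' hR x₀ (by rw [hx₀]; linarith) (by rw [hx₀]; linarith)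
  have hevlow₀ := st19_ev_lower hgr s v hc₀ hxp₀ hlow₀
  have htlow₀ := st19_tend hgr x₀ (Real.log c₀)
  have hfge : ∀ᶠ t in atTop, x₀ - 1 ≤ f t := by
    filter_upwards [hevlow₀, htlow₀.eventually (eventually_ge_nhds (by linarith : x₀ - 1 < x₀))]
      with t hA hB
    exact hB.trans hA
  have hbdd_ge : atTop.IsBoundedUnder (· ≥ ·) f := ⟨x₀ - 1, eventually_map.mpr hfge⟩
  -- one fixed upper bound (for boundedness)
  set x₁ : ℝ := (b + γ'') / 2 with hx₁
  obtain ⟨C₁, hC₁⟩ :=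
    st19_bootUp hΦ hgr s v hres2' hQ x₁ (by rw [hx₁]; linarith) (by rw [hx₁]; linarith)
  have hevup₁ := st19_ev_upper hΦ hgr s v hv hC₁
  have htup₁ := st19_tend hgr x₁ (Real.log (max C₁ 1))
  have hfle : ∀ᶠ t in atTop, f t ≤ x₁ + 1 := by
    filter_upwards [hevup₁, htup₁.eventually (eventually_le_nhds (by linarith : x₁ < x₁ + 1))]
      with t hA hB
    exact hA.trans hB
  have hbdd_le : atTop.IsBoundedUnder (· ≤ ·) f := ⟨x₁ + 1, eventually_map.mpr hfle⟩
  refine ⟨?_, liminf_le_limsup hbdd_le hbdd_ge, ?_⟩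
  · -- a ≤ liminf
    refine le_of_forall_lt_imp_le_of_dense fun y hy => ?_
    set x : ℝ := max y x₀ with hx
    have hx1 : γ' ≤ x := le_trans (by rw [hx₀]; linarith) (le_max_right y x₀)
    have hx2 : x < a := max_lt hy (by rw [hx₀]; linarith)
    obtain ⟨c₁, p₁, hc₁, hxp₁, hlow₁⟩ := st19_bootDown hΦ hgr s v hv hres1' hR x hx1 hx2
    have hevlow := st19_ev_lower hgr s v hc₁ hxp₁ hlow₁
    have htlow := st19_tend hgr x (Real.log c₁)
    have hlim : x ≤ Filter.liminf f atTop := by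
      have h := liminf_le_liminf hevlow htlow.isBoundedUnder_ge
        (hbdd_le.isCoboundedUnder_ge)
      rwa [htlow.liminf_eq] at h
    exact le_trans (le_max_left y x₀) hlim
  · -- limsup ≤ b
    refine le_of_forall_gt_imp_ge_of_dense fun y hy => ?_
    set x : ℝ := min y x₁ with hx
    have hx1 : b < x := lt_min hy (by rw [hx₁]; linarith)
    have hx2 : x ≤ γ'' := le_trans (min_le_right y x₁) (by rw [hx₁]; linarith)
    obtain ⟨C₂, hC₂⟩ := st19_bootUp hΦ hgr s v hres2' hQ x hx1 hx2
    have hevup := st19_ev_upper hΦ hgr s v hv hC₂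
    have htup := st19_tend hgr x (Real.log (max C₂ 1))
    have hlim : Filter.limsup f atTop ≤ x := by
      have h := limsup_le_limsup hevup (hbdd_ge.isCoboundedUnder_le)
        htup.isBoundedUnder_le
      rwa [htup.limsup_eq] at h
    exact le_trans hlim (min_le_left y x₁)
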